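/- Let X be a nonempty finite set, let P and P̂ be matrices on ℝ^X, let γ ∈ ℝ, and let q* : X → ℝ. Set u = (I − γ·P) q*, and suppose I − γ·P̂ is invertible. Then for every q̂ : X → ℝ, writing b̂ = u + γ·P̂ q̂ − q̂ for the empirical residual, one has the exact decomposition q̂ − q* = γ·(I − γ·P̂)⁻¹ (P̂ − P) q* − (I − γ·P̂)⁻¹ b̂. -/
import Mathlib


open Matrix BigOperators

/-- Lemma (Source error decomposition): if `u = (I − γP)q*` and `I − γP̂` is
invertible, then for every `q̂` with empirical residual `b̂ = u + γ P̂ q̂ − q̂`,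
`q̂ − q* = γ (I − γP̂)⁻¹ (P̂ − P) q* − (I − γP̂)⁻¹ b̂`. -/
theorem stmt_11 {X : Type*} [Fintype X] [Nonempty X] [DecidableEq X]
    (P Phat : Matrix X X ℝ) (γ : ℝ) (qstar : X → ℝ)
    (u : X → ℝ) (hu : u = ((1 : Matrix X X ℝ) - γ • P) *ᵥ qstar)
    (hinv : IsUnit ((1 : Matrix X X ℝ) - γ • Phat)) :
    ∀ qhat : X → ℝ,
      qhat - qstar =
        γ • (((1 : Matrix X X ℝ) - γ • Phat)⁻¹ *ᵥ ((Phat - P) *ᵥ qstar)) -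
          ((1 : Matrix X X ℝ) - γ • Phat)⁻¹ *ᵥ (u + γ • (Phat *ᵥ qhat) - qhat) := by
  intro qhat
  set A := (1 : Matrix X X ℝ) - γ • Phat with hA
  have hdet : IsUnit A.det := (Matrix.isUnit_iff_isUnit_det A).mp hinv
  have hAi : A⁻¹ * A = 1 := Matrix.nonsing_inv_mul A hdet
  have key : γ • ((Phat - P) *ᵥ qstar) - (u + γ • (Phat *ᵥ qhat) - qhat)
      = A *ᵥ (qhat - qstar) := by
    subst hu
    simp only [hA, Matrix.sub_mulVec, Matrix.smul_mulVec, Matrix.one_mulVec,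
      Matrix.mulVec_sub, Matrix.mulVec_smul]
    module
  calc qhat - qstar = A⁻¹ *ᵥ (A *ᵥ (qhat - qstar)) := by
        rw [Matrix.mulVec_mulVec, hAi, Matrix.one_mulVec]
    _ = γ • (A⁻¹ *ᵥ ((Phat - P) *ᵥ qstar)) - A⁻¹ *ᵥ (u + γ • (Phat *ᵥ qhat) - qhat) := by
        rw [← key, Matrix.mulVec_sub, Matrix.mulVec_smul]
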